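/- Let m ≥ 4 and t > m-2 > 1. Let H be an m-uniform hypergraph with girth at least 5 (no two hyperedges share more than one vertex, and no Berge cycle of length 2, 3 or 4), and let G be the graph obtained by replacing each hyperedge of H with a clique K_m on its vertices. Then G contains no copy of K_{2,t}. -/
import Mathlib


theorem stmt_11 {V : Type*} [DecidableEq V] (m t : ℕ) (hm : 4 ≤ m) (ht : m - 2 < t)
    (E : Finset (Finset V)) (huniform : ∀ e ∈ E, e.card = m)
    -- any two distinct hyperedges share at most one vertex (no Berge 2-cycle)
    (hint : ∀ e₁ ∈ E, ∀ e₂ ∈ E, e₁ ≠ e₂ → (e₁ ∩ e₂).card ≤ 1)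
    -- no Berge cycle of length 3
    (h3 : ¬ ∃ e₁ ∈ E, ∃ e₂ ∈ E, ∃ e₃ ∈ E, e₁ ≠ e₂ ∧ e₂ ≠ e₃ ∧ e₃ ≠ e₁ ∧
      ∃ v₁ v₂ v₃ : V, v₁ ≠ v₂ ∧ v₂ ≠ v₃ ∧ v₃ ≠ v₁ ∧
        v₁ ∈ e₁ ∩ e₂ ∧ v₂ ∈ e₂ ∩ e₃ ∧ v₃ ∈ e₃ ∩ e₁)
    -- no Berge cycle of length 4
    (h4 : ¬ ∃ e₁ ∈ E, ∃ e₂ ∈ E, ∃ e₃ ∈ E, ∃ e₄ ∈ E,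
      e₁ ≠ e₂ ∧ e₁ ≠ e₃ ∧ e₁ ≠ e₄ ∧ e₂ ≠ e₃ ∧ e₂ ≠ e₄ ∧ e₃ ≠ e₄ ∧
      ∃ v₁ v₂ v₃ v₄ : V, v₁ ≠ v₂ ∧ v₁ ≠ v₃ ∧ v₁ ≠ v₄ ∧ v₂ ≠ v₃ ∧ v₂ ≠ v₄ ∧ v₃ ≠ v₄ ∧
        v₁ ∈ e₁ ∩ e₂ ∧ v₂ ∈ e₂ ∩ e₃ ∧ v₃ ∈ e₃ ∩ e₄ ∧ v₄ ∈ e₄ ∩ e₁)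
    (G : SimpleGraph V)
    (hG : ∀ u v : V, G.Adj u v ↔ u ≠ v ∧ ∃ e ∈ E, u ∈ e ∧ v ∈ e) :
    ¬ ∃ f : completeBipartiteGraph (Fin 2) (Fin t) →g G, Function.Injective f := by
  rintro ⟨f, hf⟩
  have ht3 : 3 ≤ t := by omega
  haveI : NeZero t := ⟨by omega⟩
  have h01 : (0 : Fin t) ≠ 1 := by
    have : ((0 : Fin t) : ℕ) ≠ ((1 : Fin t) : ℕ) := by
      simp [Fin.val_one', Nat.mod_eq_of_lt (by omega : 1 < t)]
    exact fun h => this (congrArg Fin.val h)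
  set a := f (Sum.inl 0) with ha
  set b := f (Sum.inl 1) with hb
  set x : Fin t → V := fun i => f (Sum.inr i) with hxdef
  have hab : a ≠ b := fun h => by simpa using hf h
  have hax : ∀ i, a ≠ x i := fun i h => by simpa using hf h
  have hbx : ∀ i, b ≠ x i := fun i h => by simpa using hf h
  have hxinj : Function.Injective x := fun i j h => by simpa using hf h
  have hxx : ∀ i j, i ≠ j → x i ≠ x j := fun i j hij h => hij (hxinj h)
  have hadjA : ∀ i, G.Adj a (x i) := fun i => f.map_adj (by simp)
  have hadjB : ∀ i, G.Adj b (x i) := fun i => f.map_adj (by simp)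
  choose eA heAE haA hxA using fun i => ((hG a (x i)).1 (hadjA i)).2
  choose eB heBE hbB hxB using fun i => ((hG b (x i)).1 (hadjB i)).2
  have hlin : ∀ e₁ ∈ E, ∀ e₂ ∈ E, e₁ ≠ e₂ → ∀ u v : V, u ≠ v →
      u ∈ e₁ → u ∈ e₂ → v ∈ e₁ → v ∈ e₂ → False := by
    intro e₁ h₁ e₂ h₂ hne u v huv hu1 hu2 hv1 hv2
    have hsub : ({u, v} : Finset V) ⊆ e₁ ∩ e₂ := by
      intro w hw
      simp only [Finset.mem_insert, Finset.mem_singleton] at hw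
      rcases hw with rfl | rfl <;> simp [Finset.mem_inter, hu1, hu2, hv1, hv2]
    have hc : 2 ≤ (e₁ ∩ e₂).card := by
      calc 2 = ({u, v} : Finset V).card := (Finset.card_pair huv).symm
        _ ≤ _ := Finset.card_le_card hsub
    have := hint e₁ h₁ e₂ h₂ hne
    omega
  by_cases hall : ∀ i, eA i = eB i
  · -- every eA i contains a, b, x i; all equal; contradiction with card = m
    have hbA : ∀ i, b ∈ eA i := fun i => by rw [hall i]; exact hbB i
    have heq : ∀ i, eA i = eA 0 := by
      intro i
      by_contra hne
      exact hlin (eA i) (heAE i) (eA 0) (heAE 0) hne a b hab (haA i) (haA 0) (hbA i) (hbA 0)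
    have hsub : insert a (insert b (Finset.image x Finset.univ)) ⊆ eA 0 := by
      intro w hw
      simp only [Finset.mem_insert, Finset.mem_image, Finset.mem_univ, true_and] at hw
      rcases hw with rfl | rfl | ⟨i, rfl⟩
      · exact haA 0
      · exact hbA 0
      · rw [← heq i]; exact hxA i
    have hcard : (insert a (insert b (Finset.image x Finset.univ))).card = t + 2 := by
      rw [Finset.card_insert_of_notMem, Finset.card_insert_of_notMem,
        Finset.card_image_of_injective _ hxinj, Finset.card_univ, Fintype.card_fin]
      · simp only [Finset.mem_image, Finset.mem_univ, true_and, not_exists]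
        exact fun i h => hbx i h.symm
      · simp only [Finset.mem_insert, Finset.mem_image, Finset.mem_univ, true_and, not_or,
          not_exists]
        exact ⟨hab, fun i h => hax i h.symm⟩
    have := Finset.card_le_card hsub
    rw [hcard, huniform _ (heAE 0)] at this
    omega
  · push_neg at hall
    obtain ⟨j, hj⟩ := hall
    by_cases habE : ∃ e ∈ E, a ∈ e ∧ b ∈ e
    · obtain ⟨e, heE, haE, hbE⟩ := habE
      have h1 : e ≠ eA j := by
        rintro rfl
        exact hlin _ (heAE j) _ (heBE j) hj b (x j) (hbx j) hbE (hbB j) (hxA j) (hxB j)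
      have h2 : eB j ≠ e := by
        rintro rfl
        exact hlin _ (heAE j) _ (heBE j) hj a (x j) (hax j) (haA j) haE (hxA j) (hxB j)
      exact h3 ⟨e, heE, eA j, heAE j, eB j, heBE j, h1, hj, h2, a, x j, b,
        hax j, (hbx j).symm, hab.symm,
        Finset.mem_inter.2 ⟨haE, haA j⟩, Finset.mem_inter.2 ⟨hxA j, hxB j⟩,
        Finset.mem_inter.2 ⟨hbB j, hbE⟩⟩
    · push_neg at habE
      have hAB : ∀ i k, eA i ≠ eB k := fun i k h =>
        habE (eA i) (heAE i) (haA i) (by rw [h]; exact hbB k)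
      have hx01 : x 0 ≠ x 1 := hxx 0 1 h01
      by_cases hEE : eA 0 = eA 1
      · -- 3-cycle eA 0, eB 0, eB 1
        have hBB : eB 0 ≠ eB 1 := by
          rintro h
          exact hlin _ (heAE 0) _ (heBE 0) (hAB 0 0) (x 0) (x 1) hx01
            (hxA 0) (hxB 0) (by rw [hEE]; exact hxA 1) (by rw [h]; exact hxB 1)
        exact h3 ⟨eA 0, heAE 0, eB 0, heBE 0, eB 1, heBE 1, hAB 0 0, hBB,
          fun h => hAB 0 1 h.symm, x 0, b, x 1,
          (hbx 0).symm, hbx 1, hx01.symm,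
          Finset.mem_inter.2 ⟨hxA 0, hxB 0⟩, Finset.mem_inter.2 ⟨hbB 0, hbB 1⟩,
          Finset.mem_inter.2 ⟨hxB 1, by rw [hEE]; exact hxA 1⟩⟩
      · by_cases hBB : eB 0 = eB 1
        · -- 3-cycle eA 0, eA 1, eB 0
          exact h3 ⟨eA 0, heAE 0, eA 1, heAE 1, eB 0, heBE 0, hEE, hAB 1 0,
            fun h => hAB 0 0 h.symm, a, x 1, x 0,
            hax 1, hx01.symm, (hax 0).symm,
            Finset.mem_inter.2 ⟨haA 0, haA 1⟩,
            Finset.mem_inter.2 ⟨hxA 1, by rw [hBB]; exact hxB 1⟩,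
            Finset.mem_inter.2 ⟨hxB 0, hxA 0⟩⟩
        · -- 4-cycle eA 0, eB 0, eB 1, eA 1
          exact h4 ⟨eA 0, heAE 0, eB 0, heBE 0, eB 1, heBE 1, eA 1, heAE 1,
            hAB 0 0, hAB 0 1, hEE, hBB, fun h => hAB 1 0 h.symm,
            fun h => hAB 1 1 h.symm, x 0, b, x 1, a,
            (hbx 0).symm, hx01, (hax 0).symm, hbx 1, hab.symm, (hax 1).symm,
            Finset.mem_inter.2 ⟨hxA 0, hxB 0⟩, Finset.mem_inter.2 ⟨hbB 0, hbB 1⟩,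
            Finset.mem_inter.2 ⟨hxB 1, hxA 1⟩, Finset.mem_inter.2 ⟨haA 1, haA 0⟩⟩
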